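/- For every d ≥ 1, ω_d(H_min) = 2: the infimum over x ∈ ℝ^d \ ℚ^d of the exponent of irrationality with respect to the height H_min(p₁/q₁,…,p_d/q_d) = min(q₁,…,q_d) (fractions in lowest terms) equals 2. -/

import Mathlib

open Filter

lemma sqrt2_bad (q : ℚ) (h1 : |Real.sqrt 2 - q| < 1) :
    1 / (4 * (q.den : ℝ) ^ 2) ≤ |Real.sqrt 2 - q| := by
  set s := Real.sqrt 2 with hs
  have hs0 : 0 ≤ s := Real.sqrt_nonneg 2
  have hs2 : s ^ 2 = 2 := Real.sq_sqrt (by norm_num)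
  have hb : (0:ℝ) < (q.den : ℝ) := by exact_mod_cast q.pos
  have hqr : (q : ℝ) = (q.num : ℝ) / (q.den : ℝ) := by exact_mod_cast (Rat.num_div_den q).symm
  have hk : (q.num : ℝ) ^ 2 - 2 * (q.den : ℝ) ^ 2 ≠ 0 := by
    intro h
    have hq2 : (q : ℝ) ^ 2 = 2 := by
      rw [hqr]; field_simp; linarith
    have : (s - q) * (s + q) = 0 := by nlinarith
    rcases mul_eq_zero.mp this with h' | h'
    · exact irrational_sqrt_two.ne_rat q (by linarith)
    · exact irrational_sqrt_two.ne_rat (-q) (by push_cast; linarith)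
  have hint : (1:ℝ) ≤ |(q.num : ℝ) ^ 2 - 2 * (q.den : ℝ) ^ 2| := by
    have h2 : (q.num ^ 2 - 2 * (q.den:ℤ) ^ 2 : ℤ) ≠ 0 := by
      intro h; apply hk; exact_mod_cast congrArg (fun z : ℤ => (z:ℝ)) h
    have h3 := Int.one_le_abs h2
    calc (1:ℝ) = ((1:ℤ):ℝ) := by norm_num
      _ ≤ ((|q.num ^ 2 - 2 * (q.den:ℤ) ^ 2| : ℤ) : ℝ) := by exact_mod_cast h3
      _ = |(q.num : ℝ) ^ 2 - 2 * (q.den : ℝ) ^ 2| := by rw [Int.cast_abs]; push_cast; ring_nf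
  have heq : |(q:ℝ) ^ 2 - 2| * (q.den:ℝ)^2 = |(q.num : ℝ) ^ 2 - 2 * (q.den : ℝ) ^ 2| := by
    have h5 : ((q:ℝ)^2 - 2) * (q.den:ℝ)^2 = (q.num : ℝ) ^ 2 - 2 * (q.den : ℝ) ^ 2 := by
      rw [hqr]; field_simp
    calc |(q:ℝ) ^ 2 - 2| * (q.den:ℝ)^2 = |(q:ℝ) ^ 2 - 2| * |(q.den:ℝ)^2| := by
          rw [abs_of_pos (by positivity : (0:ℝ) < (q.den:ℝ)^2)]
      _ = |((q:ℝ)^2 - 2) * (q.den:ℝ)^2| := (abs_mul _ _).symm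
      _ = _ := by rw [h5]
  have hkey : 1 / (q.den : ℝ) ^ 2 ≤ |(q:ℝ) ^ 2 - 2| := by
    rw [div_le_iff₀ (by positivity)]
    rw [← heq] at hint; linarith
  have hfac : |(q:ℝ) ^ 2 - 2| = |s - q| * |s + q| := by
    rw [← abs_mul, abs_sub_comm]
    congr 1; linear_combination -hs2
  have habs : |s + (q:ℝ)| < 4 := by
    have hslt : s < 3/2 := by
      nlinarith [Real.sq_sqrt (show (0:ℝ) ≤ 2 by norm_num), Real.sqrt_nonneg (2:ℝ)]
    have hq1 : |(q:ℝ)| < s + 1 := by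
      have := abs_sub_abs_le_abs_sub (q:ℝ) s
      rw [abs_sub_comm] at h1
      rw [abs_of_nonneg hs0] at this
      linarith
    have h6 := abs_add_le s (q:ℝ)
    rw [abs_of_nonneg hs0] at h6
    linarith
  have h4 : 1 / (q.den : ℝ) ^ 2 ≤ |s - q| * 4 := by
    calc 1 / (q.den : ℝ) ^ 2 ≤ |s - q| * |s + q| := hfac ▸ hkey
      _ ≤ |s - q| * 4 := by nlinarith [abs_nonneg (s - (q:ℝ)), abs_nonneg (s + (q:ℝ))]
  rw [div_le_iff₀ (by positivity)]
  rw [div_le_iff₀ (by positivity : (0:ℝ) < (q.den:ℝ)^2)] at h4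
  nlinarith

lemma dirichlet_small {ξ : ℝ} (hirr : Irrational ξ) {ε : ℝ} (hε : 0 < ε) :
    ∃ q : ℚ, |ξ - q| < 1 / (q.den : ℝ) ^ 2 ∧ |ξ - q| < ε := by
  obtain ⟨q0, hq0⟩ := exists_rat_near ξ hε
  obtain ⟨q, hq1, hq2⟩ := Real.exists_rat_abs_sub_lt_and_lt_of_irrational hirr q0
  exact ⟨q, hq1, hq2.trans hq0⟩

theorem exponent_of_irrationality_Hmin (d : ℕ) (hd : 1 ≤ d)
    (Hmin : (Fin d → ℚ) → ℕ) (hH : ∀ r : Fin d → ℚ, Hmin r = ⨅ i, (r i).den) :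
    (∀ x : Fin d → ℝ, (¬ ∀ i, ∃ q : ℚ, x i = (q : ℝ)) →
      ∀ α : ℝ, 0 ≤ α → α < 2 →
        ∃ r : ℕ → (Fin d → ℚ),
          Tendsto (fun n => fun i => ((r n i : ℝ))) atTop (nhds x) ∧
          ∀ n, dist x (fun i => ((r n i : ℝ))) < (Hmin (r n) : ℝ) ^ (-α)) ∧
    (∀ α : ℝ, 2 < α →
      ∃ x : Fin d → ℝ, (¬ ∀ i, ∃ q : ℚ, x i = (q : ℝ)) ∧
        ¬ ∃ r : ℕ → (Fin d → ℚ),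
          Tendsto (fun n => fun i => ((r n i : ℝ))) atTop (nhds x) ∧
          ∀ n, dist x (fun i => ((r n i : ℝ))) < (Hmin (r n) : ℝ) ^ (-α)) := by
  have hne : Nonempty (Fin d) := ⟨⟨0, hd⟩⟩
  constructor
  · intro x hx α hα0 hα2
    push_neg at hx
    obtain ⟨i₀, hi₀⟩ := hx
    have hirr : Irrational (x i₀) := by
      rintro ⟨q, hq⟩; exact hi₀ q hq.symm
    have A : ∀ n : ℕ, ∃ v : Fin d → ℚ,
        ∀ i, |x i - v i| < 1/((n:ℝ)+1) ∧ |x i - v i| < 1/(((v i₀).den:ℝ))^2 := by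
      intro n
      have hε : (0:ℝ) < 1/((n:ℝ)+1) := by positivity
      obtain ⟨q, hq1, hq2⟩ := dirichlet_small hirr hε
      have hδ : (0:ℝ) < min (1/((n:ℝ)+1)) (1/((q.den:ℝ))^2) :=
        lt_min hε (by positivity)
      choose f hf using fun i : Fin d => exists_rat_near (x i) hδ
      refine ⟨fun i => if i = i₀ then q else f i, fun i => ?_⟩
      simp only [if_pos rfl]
      by_cases h : i = i₀
      · subst h; simp only [if_pos rfl]; exact ⟨hq2, hq1⟩
      · simp only [if_neg h]
        exact ⟨(hf i).trans_le (min_le_left _ _), (hf i).trans_le (min_le_right _ _)⟩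
    choose r hr using A
    refine ⟨r, ?_, ?_⟩
    · rw [Metric.tendsto_atTop]
      intro ε hε
      obtain ⟨N, hN⟩ := exists_nat_one_div_lt hε
      refine ⟨N, fun n hn => ?_⟩
      rw [dist_pi_lt_iff hε]
      intro i
      rw [Real.dist_eq, abs_sub_comm]
      have h12 : 1/((n:ℝ)+1) ≤ 1/((N:ℝ)+1) := by
        apply one_div_le_one_div_of_le (by positivity)
        have hNn : (N:ℝ) ≤ (n:ℝ) := by exact_mod_cast hn
        linarith
      linarith [(hr n i).1]
    · intro n
      set v := r n with hv
      have h2 : Hmin v ≤ (v i₀).den := by rw [hH]; exact ciInf_le' _ i₀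
      have h3 : 1 ≤ Hmin v := by rw [hH]; exact le_ciInf fun i => (v i).pos
      have hH0 : (0:ℝ) < (Hmin v : ℝ) := by exact_mod_cast h3
      have hpos : (0:ℝ) < (Hmin v : ℝ)^(-α) := Real.rpow_pos_of_pos hH0 _
      rw [dist_pi_lt_iff hpos]
      intro i
      rw [Real.dist_eq]
      refine lt_of_lt_of_le (hr n i).2 ?_
      have hd1 : (1:ℝ) ≤ ((v i₀).den : ℝ) := by exact_mod_cast (v i₀).pos
      have hc1 : (Hmin v:ℝ)^α ≤ ((v i₀).den:ℝ)^α :=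
        Real.rpow_le_rpow hH0.le (by exact_mod_cast h2) hα0
      have hc2 : ((v i₀).den:ℝ)^α ≤ ((v i₀).den:ℝ)^(2:ℝ) :=
        Real.rpow_le_rpow_of_exponent_le hd1 hα2.le
      have hc3 : ((v i₀).den:ℝ)^(2:ℝ) = ((v i₀).den:ℝ)^(2:ℕ) := by
        rw [← Real.rpow_natCast ((v i₀).den:ℝ) 2]; norm_num
      rw [Real.rpow_neg hH0.le, one_div]
      apply inv_anti₀ (Real.rpow_pos_of_pos hH0 α)
      exact hc1.trans (hc2.trans_eq hc3)
  · intro α hα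
    refine ⟨fun _ => Real.sqrt 2, ?_, ?_⟩
    · intro h
      obtain ⟨q, hq⟩ := h ⟨0, hd⟩
      exact irrational_sqrt_two.ne_rat q hq
    · rintro ⟨r, hT, hB⟩
      set Q : ℝ := (4:ℝ)^((1:ℝ)/(α-2)) with hQdef
      have hQ0 : 0 < Q := Real.rpow_pos_of_pos (by norm_num) _
      have key : ∀ n, 1/(4*Q^2) ≤ dist (fun i => ((r n i : ℝ))) ((fun _ => Real.sqrt 2 : Fin d → ℝ)) := by
        intro n
        obtain ⟨i₀, hi₀⟩ := Finite.exists_min (fun j : Fin d => (r n j).den)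
        have hHv : Hmin (r n) = (r n i₀).den := by
          rw [hH]; exact le_antisymm (ciInf_le' _ i₀) (le_ciInf hi₀)
        set q : ℝ := ((r n i₀).den : ℝ) with hqdef
        have hq1 : (1:ℝ) ≤ q := Nat.one_le_cast.mpr (r n i₀).pos
        have hq0 : (0:ℝ) < q := by linarith
        have hb := hB n
        rw [hHv] at hb
        have hco : |Real.sqrt 2 - ((r n i₀ : ℝ))| ≤
            dist ((fun _ => Real.sqrt 2) : Fin d → ℝ) (fun i => ((r n i : ℝ))) := by
          have h := dist_le_pi_dist ((fun _ => Real.sqrt 2) : Fin d → ℝ) (fun i => ((r n i : ℝ))) i₀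
          rwa [Real.dist_eq] at h
        have hlt : |Real.sqrt 2 - ((r n i₀ : ℝ))| < q^(-α) := lt_of_le_of_lt hco hb
        have hle1 : q^(-α) ≤ 1 := Real.rpow_le_one_of_one_le_of_nonpos hq1 (by linarith)
        have hbad := sqrt2_bad (r n i₀) (lt_of_lt_of_le hlt hle1)
        have h7 : 1/(4*q^2) < q^(-α) := lt_of_le_of_lt hbad hlt
        have hqa : 0 < q^α := Real.rpow_pos_of_pos hq0 α
        have h8 : q^(α-2) < 4 := by
          have h7' : q ^ α < 4 * q ^ 2 := by
            rw [Real.rpow_neg hq0.le, one_div] at h7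
            have h4q : (0:ℝ) < 4 * q^2 := by positivity
            by_contra hcon
            push_neg at hcon
            have hcc : (q^α)⁻¹ ≤ (4*q^2)⁻¹ := inv_anti₀ h4q hcon
            linarith
          have e1 : q ^ α = q^(α-2) * q^(2:ℝ) := by rw [← Real.rpow_add hq0]; ring_nf
          have e2 : q^(2:ℝ) = q^(2:ℕ) := by rw [← Real.rpow_natCast q 2]; norm_num
          rw [e1, e2] at h7'
          exact (mul_lt_mul_iff_of_pos_right (by positivity : (0:ℝ) < q^(2:ℕ))).mp h7'
        have h9 : q < Q := by
          have h10 := Real.rpow_lt_rpow (Real.rpow_nonneg hq0.le _) h8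
            (one_div_pos.mpr (by linarith : (0:ℝ) < α - 2))
          rwa [← Real.rpow_mul hq0.le, mul_one_div, div_self (by linarith : α - 2 ≠ 0),
            Real.rpow_one] at h10
        have h11 : 1/(4*Q^2) < 1/(4*q^2) := by
          apply one_div_lt_one_div_of_lt (by positivity)
          nlinarith
        rw [dist_comm]
        exact (h11.le.trans hbad).trans hco
      rw [Metric.tendsto_atTop] at hT
      obtain ⟨N, hN⟩ := hT (1/(4*Q^2)) (by positivity)
      exact absurd (hN N le_rfl) (not_lt.mpr (key N))
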